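/- Let n ≥ 1 be a natural number and let y and a be complex numbers. Then ∑_{p=1}^{n} y^{p} · ∑_{{I_1,…,I_p} ∈ Π_p({1,…,n})} ∏_{j=1}^{p} (a · |I_j|)^{|I_j| − 1} = y · (y + n·a)^{n−1}. -/
import Mathlib

/-- `IsPartitionInto p S P` means `P` is a partition of the finset `S` into `p`
nonempty, pairwise disjoint blocks whose union is `S`. -/
def IsPartitionInto {ι : Type*} [DecidableEq ι] (p : ℕ) (S : Finset ι)
    (P : Finset (Finset ι)) : Prop :=
  P.card = p ∧ (∅ : Finset ι) ∉ P ∧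
    (∀ I ∈ P, ∀ J ∈ P, I ≠ J → Disjoint I J) ∧ P.sup id = S

instance {ι : Type*} [DecidableEq ι] (p : ℕ) (S : Finset ι) :
    DecidablePred (IsPartitionInto p S) := fun _ => by
  unfold IsPartitionInto; infer_instance

set_option linter.unusedSectionVars false


open Finset Polynomial

noncomputable def abelP (b : ℂ) : ℕ → ℂ[X]
  | 0 => 1
  | (k+1) => X * (X + C (((k+1 : ℕ) : ℂ) * b)) ^ k

lemma abelP_deriv (b : ℂ) (k : ℕ) :
    (abelP b (k+1)).derivative = (k+1 : ℕ) • ((abelP b k).comp (X + C b)) := by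
  cases k with
  | zero => simp [abelP]
  | succ j =>
      simp only [abelP, derivative_mul, derivative_X, derivative_pow, derivative_add,
        derivative_C, add_zero, one_mul, mul_comp, X_comp, pow_comp, add_comp, C_comp,
        C_mul, map_natCast, nsmul_eq_mul, derivative_natCast, derivative_one, derivative_ofNat, natCast_comp, ofNat_comp, one_comp]
      push_cast
      ring

lemma abelP_eval_zero (b : ℂ) (k : ℕ) : (abelP b (k+1)).eval 0 = 0 := by
  simp [abelP]

theorem abel_poly (b : ℂ) : ∀ N : ℕ, ∀ c : ℂ,
    ∑ k ∈ Finset.range (N+1),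
        ((N.choose k : ℂ) * (c - k*b)^(N-k)) • abelP b k = (X + C c)^N := by
  intro N
  induction N with
  | zero => intro c; simp [abelP]
  | succ N ih =>
      intro c
      set L : ℂ[X] := ∑ k ∈ Finset.range (N+1+1),
        (((N+1).choose k : ℂ) * (c - k*b)^(N+1-k)) • abelP b k with hL
      set R : ℂ[X] := (X + C c)^(N+1) with hR
      have hderiv : (L - R).derivative = 0 := by
        have hdL : L.derivative = (N+1 : ℕ) • ((X + C c)^N) := by
          rw [hL, derivative_sum]
          simp only [derivative_smul]
          rw [Finset.sum_range_succ']
          simp only [abelP_deriv]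
          have e0 : ((((N+1).choose 0 : ℂ)) * (c - (0:ℕ)*b)^(N+1-0)) • derivative (abelP b 0) = 0 := by
            simp [abelP]
          rw [e0, add_zero]
          have step : ∀ j ∈ Finset.range (N+1),
              (((N+1).choose (j+1) : ℂ) * (c - (j+1:ℕ)*b)^(N+1-(j+1))) •
                ((j+1 : ℕ) • ((abelP b j).comp (X + C b)))
              = (N+1 : ℕ) • (((N.choose j : ℂ) * ((c-b) - j*b)^(N-j)) • ((abelP b j).comp (X + C b))) := by
            intro j hj
            rw [smul_comm, ← Nat.cast_smul_eq_nsmul ℂ (j+1), smul_smul,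
                ← Nat.cast_smul_eq_nsmul ℂ (N+1), smul_smul]
            congr 1
            have hcomb : ((N+1).choose (j+1) : ℂ) * ((j+1 : ℕ) : ℂ)
                = ((N+1 : ℕ) : ℂ) * (N.choose j : ℂ) := by
              rw [← Nat.cast_mul, ← Nat.cast_mul, ← Nat.add_one_mul_choose_eq]
            have harg : c - ((j+1 : ℕ) : ℂ)*b = (c - b) - j*b := by push_cast; ring
            have hexp : N+1-(j+1) = N - j := by omega
            rw [hexp, harg]
            push_cast at hcomb ⊢
            ring_nf
            ring_nf at hcomb
            linear_combination ((c - b - j*b)^(N-j)) * hcomb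
          rw [Finset.sum_congr rfl step, ← Finset.smul_sum]
          congr 1
          simp only [← Polynomial.smul_comp]
          rw [← Polynomial.sum_comp, ih (c - b)]
          simp only [add_comp, X_comp, C_comp, pow_comp]
          rw [add_assoc, ← C_add]
          ring_nf
        have hdR : R.derivative = (N+1 : ℕ) • ((X + C c)^N) := by
          rw [hR, derivative_pow]
          simp [nsmul_eq_mul, mul_comm]
        rw [derivative_sub, hdL, hdR, sub_self]
      have heval : (L - R).eval 0 = 0 := by
        have hLe : L.eval 0 = c^(N+1) := by
          rw [hL, eval_finset_sum]
          rw [Finset.sum_eq_single 0]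
          · simp [abelP]
          · intro k hk hk0
            obtain ⟨j, rfl⟩ := Nat.exists_eq_succ_of_ne_zero hk0
            simp [abelP_eval_zero]
          · simp
        have hRe : R.eval 0 = c^(N+1) := by simp [hR]
        rw [eval_sub, hLe, hRe, sub_self]
      have hC := Polynomial.eq_C_of_derivative_eq_zero hderiv
      rw [hC, eval_C] at heval
      rw [heval, map_zero] at hC
      exact sub_eq_zero.mp hC


lemma abelP_eval_succ (a y : ℂ) (N : ℕ) :
    (abelP a (N+1)).eval y = y * (y + ((N:ℂ)+1)*a)^N := by
  simp only [abelP, eval_mul, eval_X, eval_pow, eval_add, eval_C]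
  push_cast
  ring

lemma abel_sum (a y : ℂ) (N : ℕ) :
    ∑ j ∈ Finset.range (N+1),
        (N.choose j : ℂ) * (y * (a * ((j:ℂ)+1))^j * (abelP a (N-j)).eval y)
      = (abelP a (N+1)).eval y := by
  have h := congrArg (Polynomial.eval y) (abel_poly a N (((N:ℂ)+1)*a))
  simp only [eval_finset_sum, eval_smul, smul_eq_mul, eval_add, eval_X, eval_C, eval_pow] at h
  rw [abelP_eval_succ, ← h, Finset.mul_sum]
  conv_rhs => rw [← Finset.sum_range_reflect]
  apply Finset.sum_congr rfl
  intro j hj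
  have hjN : j ≤ N := by have := Finset.mem_range.mp hj; omega
  have h1 : N + 1 - 1 - j = N - j := by omega
  rw [h1, Nat.choose_symm hjN, Nat.sub_sub_self hjN]
  have h2 : ((N:ℂ)+1)*a - ((N-j : ℕ):ℂ)*a = a*((j:ℂ)+1) := by
    rw [Nat.cast_sub hjN]; push_cast; ring
  rw [h2]
  ring


def IsPart {ι : Type*} [DecidableEq ι] (S : Finset ι) (P : Finset (Finset ι)) : Prop :=
  (∅ : Finset ι) ∉ P ∧ (∀ I ∈ P, ∀ J ∈ P, I ≠ J → Disjoint I J) ∧ P.sup id = S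

instance {ι : Type*} [DecidableEq ι] (S : Finset ι) :
    DecidablePred (IsPart S) := fun _ => by
  unfold IsPart; infer_instance

section Part
variable {ι : Type*} [DecidableEq ι] [Fintype ι]

lemma IsPart.block_subset {S P} (h : IsPart S P) {I : Finset ι} (hI : I ∈ P) : I ⊆ S := by
  have := Finset.le_sup (f := id) hI
  rwa [h.2.2] at this

lemma IsPart.exists_block {S P} (h : IsPart S P) {s : ι} (hs : s ∈ S) :
    ∃ I ∈ P, s ∈ I := by
  rw [← h.2.2] at hs
  simpa using (Finset.mem_sup.mp hs)

lemma IsPart.filter_block {S P} (h : IsPart S P) {s : ι} {B : Finset ι}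
    (hB : B ∈ P) (hsB : s ∈ B) : P.filter (fun I => s ∈ I) = {B} := by
  apply Finset.eq_singleton_iff_unique_mem.mpr
  refine ⟨Finset.mem_filter.mpr ⟨hB, hsB⟩, ?_⟩
  intro J hJ
  obtain ⟨hJP, hsJ⟩ := Finset.mem_filter.mp hJ
  by_contra hne
  exact (Finset.disjoint_left.mp (h.2.1 J hJP B hB hne) hsJ) hsB

noncomputable def Gfun (w : Finset ι → ℂ) (S : Finset ι) : ℂ :=
  ∑ P ∈ Finset.univ.filter (IsPart S), ∏ I ∈ P, w I

lemma Gfun_empty (w : Finset ι → ℂ) : Gfun w (∅ : Finset ι) = 1 := by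
  have : (Finset.univ.filter (IsPart (∅ : Finset ι))) = {∅} := by
    ext P
    simp only [Finset.mem_filter, Finset.mem_univ, true_and, Finset.mem_singleton]
    constructor
    · rintro ⟨h1, _, h3⟩
      rw [Finset.eq_empty_iff_forall_notMem]
      intro I hI
      have hIsub : I ⊆ ∅ := by
        have := Finset.le_sup (f := id) hI
        rwa [h3] at this
      have : I = ∅ := Finset.subset_empty.mp hIsub
      exact h1 (this ▸ hI)
    · rintro rfl
      exact ⟨by simp, by simp, by simp⟩
  rw [Gfun, this]
  simp

lemma Gfun_rec (w : Finset ι → ℂ) (S : Finset ι) (s : ι) (hs : s ∈ S) :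
    Gfun w S = ∑ T ∈ (S.erase s).powerset, w (insert s T) * Gfun w (S \ insert s T) := by
  classical
  rw [Gfun,
    ← Finset.sum_fiberwise_of_maps_to
      (g := fun P => ((P.filter (fun I => s ∈ I)).sup id).erase s)
      (t := (S.erase s).powerset)
      (fun P hP => by
        show ((P.filter (fun I => s ∈ I)).sup id).erase s ∈ _
        rw [Finset.mem_filter] at hP
        have h : IsPart S P := hP.2
        obtain ⟨B, hB, hsB⟩ := h.exists_block hs
        rw [h.filter_block hB hsB]
        simp only [Finset.sup_singleton, id]
        exact Finset.mem_powerset.mpr (Finset.erase_subset_erase s (h.block_subset hB)))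
      (fun P => ∏ I ∈ P, w I)]
  apply Finset.sum_congr rfl
  intro T hT
  have hTsub : T ⊆ S.erase s := Finset.mem_powerset.mp hT
  set B : Finset ι := insert s T with hBdef
  have hsT : s ∉ T := fun h => (Finset.mem_erase.mp (hTsub h)).1 rfl
  have hsB : s ∈ B := Finset.mem_insert_self s T
  have hBS : B ⊆ S := Finset.insert_subset hs (hTsub.trans (Finset.erase_subset s S))
  have hBne : B ≠ ∅ := Finset.insert_ne_empty s T
  rw [Gfun, Finset.mul_sum]
  refine Finset.sum_nbij' (fun P => P.erase B) (fun Q => insert B Q) ?_ ?_ ?_ ?_ ?_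
  · -- forward membership
    intro P hP
    rw [Finset.mem_filter, Finset.mem_filter] at hP
    obtain ⟨⟨_, h⟩, hblk⟩ := hP
    obtain ⟨B', hB', hsB'⟩ := h.exists_block hs
    rw [h.filter_block hB' hsB'] at hblk
    simp only [Finset.sup_singleton, id] at hblk
    have hBB' : B = B' := by
      rw [hBdef, ← hblk, Finset.insert_erase hsB']
    subst hBB'
    refine Finset.mem_filter.mpr ⟨Finset.mem_univ _, ?_, ?_, ?_⟩
    · intro hmem
      exact h.1 (Finset.mem_of_mem_erase hmem)
    · intro I hI J hJ hne
      exact h.2.1 I (Finset.mem_of_mem_erase hI) J (Finset.mem_of_mem_erase hJ) hne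
    · ext x
      simp only [Finset.mem_sup, Finset.mem_erase, Finset.mem_sdiff, id]
      constructor
      · rintro ⟨I, ⟨hIne, hIP⟩, hxI⟩
        refine ⟨h.block_subset hIP hxI, fun hxB => ?_⟩
        exact (Finset.disjoint_left.mp (h.2.1 I hIP B hB' hIne) hxI) hxB
      · rintro ⟨hxS, hxB⟩
        obtain ⟨I, hIP, hxI⟩ := h.exists_block hxS
        exact ⟨I, ⟨fun hIB => hxB (hIB ▸ hxI), hIP⟩, hxI⟩
  · -- backward membership
    intro Q hQ
    rw [Finset.mem_filter] at hQ
    have h : IsPart (S \ B) Q := hQ.2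
    have hQdisjB : ∀ I ∈ Q, Disjoint I B := fun I hI =>
      Finset.disjoint_of_subset_left (h.block_subset hI) Finset.sdiff_disjoint
    have hpart : IsPart S (insert B Q) := by
      refine ⟨?_, ?_, ?_⟩
      · intro hmem
        rcases Finset.mem_insert.mp hmem with h1 | h1
        · exact hBne h1.symm
        · exact h.1 h1
      · intro I hI J hJ hne
        rcases Finset.mem_insert.mp hI with rfl | hIQ
        · rcases Finset.mem_insert.mp hJ with rfl | hJQ
          · exact absurd rfl hne
          · exact (hQdisjB J hJQ).symm
        · rcases Finset.mem_insert.mp hJ with rfl | hJQ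
          · exact hQdisjB I hIQ
          · exact h.2.1 I hIQ J hJQ hne
      · rw [Finset.sup_insert, h.2.2]
        simp only [id]
        rw [Finset.sup_eq_union, Finset.union_sdiff_of_subset hBS]
    refine Finset.mem_filter.mpr ⟨Finset.mem_filter.mpr ⟨Finset.mem_univ _, hpart⟩, ?_⟩
    rw [hpart.filter_block (Finset.mem_insert_self B Q) hsB]
    simp only [Finset.sup_singleton, id]
    rw [hBdef, Finset.erase_insert hsT]
  · -- left inverse
    intro P hP
    rw [Finset.mem_filter, Finset.mem_filter] at hP
    obtain ⟨⟨_, h⟩, hblk⟩ := hP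
    obtain ⟨B', hB', hsB'⟩ := h.exists_block hs
    rw [h.filter_block hB' hsB'] at hblk
    simp only [Finset.sup_singleton, id] at hblk
    have hBB' : B = B' := by rw [hBdef, ← hblk, Finset.insert_erase hsB']
    rw [hBB']
    exact Finset.insert_erase hB'
  · -- right inverse
    intro Q hQ
    rw [Finset.mem_filter] at hQ
    have h : IsPart (S \ B) Q := hQ.2
    have hBQ : B ∉ Q := by
      intro hmem
      have := h.block_subset hmem hsB
      exact (Finset.mem_sdiff.mp this).2 hsB
    exact Finset.erase_insert hBQ
  · -- products
    intro P hP
    rw [Finset.mem_filter, Finset.mem_filter] at hP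
    obtain ⟨⟨_, h⟩, hblk⟩ := hP
    obtain ⟨B', hB', hsB'⟩ := h.exists_block hs
    rw [h.filter_block hB' hsB'] at hblk
    simp only [Finset.sup_singleton, id] at hblk
    have hBB' : B = B' := by rw [hBdef, ← hblk, Finset.insert_erase hsB']
    rw [hBB']
    exact (Finset.mul_prod_erase P w hB').symm

-- NEW MATERIAL BELOW

lemma Gfun_formula (a y : ℂ) (S : Finset ι) :
    Gfun (fun I : Finset ι => y * (a * (I.card : ℂ))^(I.card - 1)) S
      = (abelP a S.card).eval y := by
  induction S using Finset.strongInduction with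
  | _ S ih =>
    set w : Finset ι → ℂ := fun I => y * (a * (I.card : ℂ))^(I.card - 1) with hw
    rcases S.eq_empty_or_nonempty with rfl | ⟨s, hs⟩
    · rw [Gfun_empty]
      simp [abelP]
    · rw [Gfun_rec w S s hs]
      set N := (S.erase s).card with hN
      have hScard : S.card = N + 1 := by
        rw [hN, Finset.card_erase_of_mem hs]
        have : 1 ≤ S.card := Finset.card_pos.mpr ⟨s, hs⟩
        omega
      have step : ∀ T ∈ (S.erase s).powerset,
          w (insert s T) * Gfun w (S \ insert s T)
            = (fun j : ℕ => y * (a * ((j:ℂ)+1))^j * (abelP a (N-j)).eval y) T.card := by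
        intro T hT
        have hTsub : T ⊆ S.erase s := Finset.mem_powerset.mp hT
        have hsT : s ∉ T := fun h => (Finset.mem_erase.mp (hTsub h)).1 rfl
        have hsub : insert s T ⊆ S :=
          Finset.insert_subset hs (hTsub.trans (Finset.erase_subset s S))
        have hci : (insert s T).card = T.card + 1 := Finset.card_insert_of_notMem hsT
        have hssub : S \ insert s T ⊂ S :=
          Finset.sdiff_ssubset hsub ⟨s, Finset.mem_insert_self s T⟩
        have hcs : (S \ insert s T).card = N - T.card := by
          rw [Finset.card_sdiff_of_subset hsub, hci, hScard]
          omega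
        rw [ih _ hssub, hcs]
        have hwv : w (insert s T) = y * (a * ((T.card : ℂ)+1))^T.card := by
          rw [hw]
          simp only [hci]
          push_cast
          ring_nf
          try rfl
        rw [hwv]
      rw [Finset.sum_congr rfl step, Finset.sum_powerset, hScard, ← abel_sum a y N]
      rw [← hN]
      apply Finset.sum_congr rfl
      intro j hj
      have hconst : ∀ t ∈ Finset.powersetCard j (S.erase s),
          (fun j : ℕ => y * (a * ((j:ℂ)+1))^j * (abelP a (N-j)).eval y) t.card
            = y * (a * ((j:ℂ)+1))^j * (abelP a (N-j)).eval y := by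
        intro t ht
        rw [(Finset.mem_powersetCard.mp ht).2]
      rw [Finset.sum_congr rfl hconst, Finset.sum_const, Finset.card_powersetCard, ← hN,
        nsmul_eq_mul]

end Part

theorem cayley_type_identity (n : ℕ) (hn : 1 ≤ n) (y a : ℂ) :
    ∑ p ∈ Finset.Icc 1 n, y ^ p
        * ∑ P ∈ Finset.univ.filter (IsPartitionInto p (Finset.univ : Finset (Fin n))),
            ∏ I ∈ P, (a * (I.card : ℂ)) ^ (I.card - 1)
      = y * (y + (n : ℂ) * a) ^ (n - 1) := by
  classical
  set w : Finset (Fin n) → ℂ := fun I => y * (a * (I.card : ℂ))^(I.card - 1) with hw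
  have hfil : ∀ p : ℕ, Finset.univ.filter (IsPartitionInto p (Finset.univ : Finset (Fin n)))
      = (Finset.univ.filter (IsPart (Finset.univ : Finset (Fin n)))).filter
          (fun P => P.card = p) := by
    intro p
    ext P
    simp only [Finset.mem_filter, Finset.mem_univ, true_and, IsPartitionInto, IsPart]
    tauto
  have hmaps : ∀ P ∈ Finset.univ.filter (IsPart (Finset.univ : Finset (Fin n))),
      P.card ∈ Finset.Icc 1 n := by
    intro P hP
    have h : IsPart (Finset.univ : Finset (Fin n)) P := (Finset.mem_filter.mp hP).2
    rw [Finset.mem_Icc]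
    constructor
    · rw [Nat.one_le_iff_ne_zero]
      intro hc
      rw [Finset.card_eq_zero] at hc
      subst hc
      have : (Finset.univ : Finset (Fin n)) = ∅ := by
        rw [← h.2.2]; simp
      have h0 : (⟨0, by omega⟩ : Fin n) ∈ (Finset.univ : Finset (Fin n)) :=
        Finset.mem_univ _
      rw [this] at h0
      exact absurd h0 (Finset.notMem_empty _)
    · have hsum : n = ∑ I ∈ P, I.card := by
        have h1 : (Finset.univ : Finset (Fin n)).card = n := by simp
        calc n = (Finset.univ : Finset (Fin n)).card := h1.symm
          _ = (P.sup id).card := by rw [h.2.2]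
          _ = (P.biUnion id).card := by rw [Finset.sup_eq_biUnion]
          _ = ∑ I ∈ P, (id I).card := Finset.card_biUnion (fun I hI J hJ hne => h.2.1 I hI J hJ hne)
          _ = ∑ I ∈ P, I.card := rfl
      have hone : ∀ I ∈ P, 1 ≤ I.card := by
        intro I hI
        rw [Nat.one_le_iff_ne_zero]
        intro hc
        rw [Finset.card_eq_zero] at hc
        exact h.1 (hc ▸ hI)
      calc P.card = ∑ _I ∈ P, 1 := by simp
        _ ≤ ∑ I ∈ P, I.card := Finset.sum_le_sum hone
        _ = n := hsum.symm
  have key : ∑ p ∈ Finset.Icc 1 n, y ^ p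
        * ∑ P ∈ Finset.univ.filter (IsPartitionInto p (Finset.univ : Finset (Fin n))),
            ∏ I ∈ P, (a * (I.card : ℂ)) ^ (I.card - 1)
      = Gfun w (Finset.univ : Finset (Fin n)) := by
    rw [Gfun, ← Finset.sum_fiberwise_of_maps_to (g := Finset.card) hmaps]
    apply Finset.sum_congr rfl
    intro p hp
    rw [hfil p, Finset.mul_sum]
    apply Finset.sum_congr rfl
    intro P hP
    have hcard : P.card = p := (Finset.mem_filter.mp hP).2
    rw [hw]
    rw [Finset.prod_mul_distrib, Finset.prod_const, hcard]
  rw [key, Gfun_formula a y]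
  obtain ⟨m, rfl⟩ : ∃ m, n = m + 1 := ⟨n - 1, by omega⟩
  have hc : (Finset.univ : Finset (Fin (m+1))).card = m + 1 := by simp
  rw [hc]
  simp only [abelP, eval_mul, eval_X, eval_pow, eval_add, eval_C, Nat.add_sub_cancel]
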